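/- Let ℓ and n be integers with ℓ ≥ 1 and n > e^{ℓ+2}. Then π_l(G_{n,ℓ}) > ℓ; that is, there exists an assignment of color lists of size ℓ to the vertices of G_{n,ℓ} for which no coloring choosing each vertex's color from its list is nonrepetitive. -/

import Mathlib

/-- `p 0, p 1, …, p m` is a simple path in `G` (injective, consecutive vertices adjacent). -/
def IsPathSeq {V : Type} (G : SimpleGraph V) (p : ℕ → V) (m : ℕ) : Prop :=
  (∀ i j, i ≤ m → j ≤ m → p i = p j → i = j) ∧ ∀ i < m, G.Adj (p i) (p (i + 1))

/-- A vertex coloring `φ` of `G` is nonrepetitive if there is no simple path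
`v₁ v₂ … v₂ᵣ` (`r ≥ 1`) in `G` with `φ(vᵢ) = φ(v_{r+i})` for all `i ∈ {1,…,r}`. -/
def Nonrepetitive {V : Type} (G : SimpleGraph V) (φ : V → ℕ) : Prop :=
  ∀ r : ℕ, 1 ≤ r → ∀ p : ℕ → V, IsPathSeq G p (2 * r - 1) →
    ∃ i < r, φ (p i) ≠ φ (p (i + r))

/-- `G` is nonrepetitively `ℓ`-choosable: every assignment of color lists of size
at least `ℓ` admits a nonrepetitive coloring from the lists. -/
def ThueChoosable {V : Type} (G : SimpleGraph V) (ℓ : ℕ) : Prop :=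
  ∀ L : V → Finset ℕ, (∀ v, ℓ ≤ (L v).card) →
    ∃ φ : V → ℕ, (∀ v, φ v ∈ L v) ∧ Nonrepetitive G φ

/-- The vertex set of the graph `G_{n,ℓ}`: `Sum.inl i` is the vertex `v_{2i+1}`
(at odd position `2i+1`, for `i = 0,…,n-1`), and `Sum.inr (i, j)` is the vertex
`v_{2i+2}^j` (at even position `2i+2`), where the even positions are blown up
into independent sets of size `(ℓn).choose ℓ`. -/
def GnlVert (n ℓ : ℕ) : Type := Fin n ⊕ Fin n × Fin ((ℓ * n).choose ℓ)

/-- The position (in `{1, …, 2n}`) of a vertex of `G_{n,ℓ}`. -/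
def GnlPos {n ℓ : ℕ} : GnlVert n ℓ → ℕ
  | Sum.inl i => 2 * i.val + 1
  | Sum.inr p => 2 * p.1.val + 2

/-- The graph `G_{n,ℓ}`: two vertices are adjacent iff their positions differ by exactly 1. -/
def Gnl (n ℓ : ℕ) : SimpleGraph (GnlVert n ℓ) where
  Adj u v := GnlPos u = GnlPos v + 1 ∨ GnlPos v = GnlPos u + 1
  symm := by constructor; intro u v h; exact h.symm
  loopless := by constructor; intro u h; rcases h with h | h <;> omega

/- ########## auxiliary development ########## -/

noncomputable def badE (n ℓ : ℕ) :
    Fin ((ℓ * n).choose ℓ) ≃ {A // A ∈ Finset.powersetCard ℓ (Finset.range (ℓ * n))} :=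
  (Fintype.equivFinOfCardEq (by simp [Finset.card_powersetCard])).symm

noncomputable def badL (n ℓ : ℕ) : GnlVert n ℓ → Finset ℕ
  | Sum.inl i => (Finset.range ℓ).image (fun j => ℓ * i.val + j)
  | Sum.inr p => (badE n ℓ p.2).val

noncomputable def cOdd (n ℓ : ℕ) (φ : GnlVert n ℓ → ℕ) (i : ℕ) : ℕ :=
  if h : i < n then φ (Sum.inl ⟨i, h⟩) else 0

open Classical in
noncomputable def missB (n ℓ : ℕ) (φ : GnlVert n ℓ → ℕ) (b : ℕ) : Finset ℕ :=
  if h : b < n then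
    (Finset.range (ℓ * n)).filter (fun x => ∀ g, φ (Sum.inr (⟨b, h⟩, g)) ≠ x)
  else ∅

section

variable {n ℓ : ℕ} {φ : GnlVert n ℓ → ℕ}

lemma badL_card (hℓ : 1 ≤ ℓ) (v : GnlVert n ℓ) : (badL n ℓ v).card = ℓ := by
  match v with
  | Sum.inl i =>
    show ((Finset.range ℓ).image (fun j => ℓ * i.val + j)).card = ℓ
    rw [Finset.card_image_of_injective _ (add_right_injective (ℓ * i.val))]
    exact Finset.card_range ℓ
  | Sum.inr p =>
    have h := (badE n ℓ p.2).2
    rw [Finset.mem_powersetCard] at h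
    exact h.2

lemma cOdd_eq {i : ℕ} (h : i < n) : cOdd n ℓ φ i = φ (Sum.inl ⟨i, h⟩) := dif_pos h

lemma cOdd_block (hφ : ∀ v, φ v ∈ badL n ℓ v) {i : ℕ} (h : i < n) :
    ℓ * i ≤ cOdd n ℓ φ i ∧ cOdd n ℓ φ i < ℓ * i + ℓ := by
  have := hφ (Sum.inl ⟨i, h⟩)
  simp only [badL, Finset.mem_image, Finset.mem_range] at this
  obtain ⟨j, hj, hje⟩ := this
  rw [cOdd_eq h, ← hje]
  omega

lemma cOdd_lt (hφ : ∀ v, φ v ∈ badL n ℓ v) {i : ℕ} (h : i < n) :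
    cOdd n ℓ φ i < ℓ * n := by
  have h1 := (cOdd_block hφ h).2
  have h2 := Nat.mul_le_mul_left ℓ (show i + 1 ≤ n by omega)
  rw [Nat.mul_add, Nat.mul_one] at h2
  omega

lemma cOdd_inj (hφ : ∀ v, φ v ∈ badL n ℓ v) {i j : ℕ} (hi : i < n) (hj : j < n)
    (he : cOdd n ℓ φ i = cOdd n ℓ φ j) : i = j := by
  have h1 := cOdd_block hφ hi
  have h2 := cOdd_block hφ hj
  rcases Nat.lt_trichotomy i j with h | h | h
  · exfalso
    have h3 := Nat.mul_le_mul_left ℓ (show i + 1 ≤ j by omega)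
    rw [Nat.mul_add, Nat.mul_one] at h3
    omega
  · exact h
  · exfalso
    have h3 := Nat.mul_le_mul_left ℓ (show j + 1 ≤ i by omega)
    rw [Nat.mul_add, Nat.mul_one] at h3
    omega

lemma missB_card (hφ : ∀ v, φ v ∈ badL n ℓ v) (hℓ : 1 ≤ ℓ) {b : ℕ} (h : b < n) :
    (missB n ℓ φ b).card ≤ ℓ - 1 := by
  by_contra hc
  have hcard : ℓ ≤ (missB n ℓ φ b).card := by omega
  obtain ⟨A, hAsub, hAcard⟩ := Finset.exists_subset_card_eq hcard
  have hAmem : A ∈ Finset.powersetCard ℓ (Finset.range (ℓ * n)) := by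
    rw [Finset.mem_powersetCard]
    refine ⟨hAsub.trans ?_, hAcard⟩
    unfold missB
    rw [dif_pos h]
    exact Finset.filter_subset _ _
  set g := (badE n ℓ).symm ⟨A, hAmem⟩ with hg
  have hv := hφ (Sum.inr (⟨b, h⟩, g))
  have hvA : φ (Sum.inr (⟨b, h⟩, g)) ∈ A := by
    have : badL n ℓ (Sum.inr (⟨b, h⟩, g)) = (badE n ℓ g).val := rfl
    rw [this, hg, Equiv.apply_symm_apply] at hv
    exact hv
  have := hAsub hvA
  unfold missB at this
  rw [dif_pos h, Finset.mem_filter] at this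
  exact this.2 g rfl

lemma copy_exists {b x : ℕ} (h : b < n) (hx : x < ℓ * n) (hm : x ∉ missB n ℓ φ b) :
    ∃ g, φ (Sum.inr (⟨b, h⟩, g)) = x := by
  unfold missB at hm
  rw [dif_pos h, Finset.mem_filter] at hm
  push_neg at hm
  exact hm (Finset.mem_range.2 hx)

lemma key (hφ : ∀ v, φ v ∈ badL n ℓ v) (hnr : Nonrepetitive (Gnl n ℓ) φ)
    {t a : ℕ} (ht : 1 ≤ t) (htn : a + 2 * t ≤ n) :
    (∃ m, m < t ∧ cOdd n ℓ φ (a + m + t) ∈ missB n ℓ φ (a + m)) ∨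
    (∃ m, m + 1 < t ∧ cOdd n ℓ φ (a + m + 1) ∈ missB n ℓ φ (a + m + t)) := by
  by_contra hcon
  push_neg at hcon
  obtain ⟨h1, h2⟩ := hcon
  have hg : ∀ k, ∃ g : Fin ((ℓ * n).choose ℓ), ∀ hb : a + k < n,
      k ≤ 2 * t - 2 →
      φ (Sum.inr (⟨a + k, hb⟩, g)) =
        (if k < t then cOdd n ℓ φ (a + k + t) else cOdd n ℓ φ (a + k + 1 - t)) := by
    intro k
    by_cases hk : k ≤ 2 * t - 2
    case neg =>
      have hpos : 0 < (ℓ * n).choose ℓ :=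
        Nat.choose_pos (Nat.le_mul_of_pos_right ℓ (by omega))
      exact ⟨⟨0, hpos⟩, fun hb hk' => absurd hk' hk⟩
    case pos =>
      have hb : a + k < n := by omega
      by_cases hkt : k < t
      · have hx : cOdd n ℓ φ (a + k + t) < ℓ * n := cOdd_lt hφ (by omega)
        obtain ⟨g, hgg⟩ := copy_exists hb hx (h1 k hkt)
        exact ⟨g, fun hb' _ => by rw [if_pos hkt]; exact hgg⟩
      · have hm : (k - t) + 1 < t := by omega
        have hmem := h2 (k - t) hm
        have heq : a + (k - t) + t = a + k := by omega
        rw [heq] at hmem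
        have hx : cOdd n ℓ φ (a + (k - t) + 1) < ℓ * n := cOdd_lt hφ (by omega)
        obtain ⟨g, hgg⟩ := copy_exists hb hx hmem
        refine ⟨g, fun hb' _ => ?_⟩
        rw [if_neg hkt]
        have he2 : a + k + 1 - t = a + (k - t) + 1 := by omega
        rw [he2]
        exact hgg
  choose g hg using hg
  set r := 2 * t - 1 with hr
  have hn0 : 0 < n := by omega
  set p : ℕ → GnlVert n ℓ := fun i =>
    if i % 2 = 0 then
      (if hb : a + i / 2 < n then Sum.inr (⟨a + i / 2, hb⟩, g (i / 2)) else Sum.inl ⟨0, hn0⟩)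
    else
      (if hb : a + i / 2 + 1 < n then Sum.inl ⟨a + i / 2 + 1, hb⟩ else Sum.inl ⟨0, hn0⟩)
    with hp
  have hpe : ∀ i, i % 2 = 0 → ∀ hb : a + i / 2 < n,
      p i = Sum.inr (⟨a + i / 2, hb⟩, g (i / 2)) := by
    intro i he hb
    simp only [hp]
    rw [if_pos he]; exact dif_pos hb
  have hpo : ∀ i, i % 2 = 1 → ∀ hb : a + i / 2 + 1 < n,
      p i = Sum.inl ⟨a + i / 2 + 1, hb⟩ := by
    intro i ho hb
    simp only [hp]
    rw [if_neg (by omega)]; exact dif_pos hb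
  have hpath : IsPathSeq (Gnl n ℓ) p (2 * r - 1) := by
    constructor
    · intro i j hi hj he
      rcases Nat.mod_two_eq_zero_or_one i with hi2 | hi2 <;>
        rcases Nat.mod_two_eq_zero_or_one j with hj2 | hj2
      · rw [hpe i hi2 (by omega), hpe j hj2 (by omega)] at he
        have he3 : a + i / 2 = a + j / 2 :=
          congrArg (fun q : Fin n × Fin ((ℓ * n).choose ℓ) => q.1.val) (Sum.inr_injective he)
        omega
      · rw [hpe i hi2 (by omega), hpo j hj2 (by omega)] at he
        exact absurd he (by simp)
      · rw [hpo i hi2 (by omega), hpe j hj2 (by omega)] at he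
        exact absurd he (by simp)
      · rw [hpo i hi2 (by omega), hpo j hj2 (by omega)] at he
        have he3 : a + i / 2 + 1 = a + j / 2 + 1 :=
          congrArg Fin.val (Sum.inl_injective he)
        omega
    · intro i hi
      rcases Nat.mod_two_eq_zero_or_one i with hi2 | hi2
      · rw [hpe i hi2 (by omega), hpo (i+1) (by omega) (by omega)]
        refine Or.inr ?_
        simp only [GnlPos]
        omega
      · rw [hpo i hi2 (by omega), hpe (i+1) (by omega) (by omega)]
        refine Or.inr ?_
        simp only [GnlPos]
        omega
  obtain ⟨i, hir, hne⟩ := hnr r (by omega) p hpath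
  apply hne
  rcases Nat.mod_two_eq_zero_or_one i with hi2 | hi2
  · rw [hpe i hi2 (by omega)]
    have hRR := hpo (i + r) (show (i + r) % 2 = 1 by omega)
      (show a + (i + r) / 2 + 1 < n by omega)
    simp only [hRR]
    rw [hg (i / 2) (by omega) (by omega), if_pos (show i / 2 < t by omega)]
    rw [← cOdd_eq (φ := φ) (show a + (i + r) / 2 + 1 < n by omega)]
    congr 1
    omega
  · rw [hpo i hi2 (by omega)]
    have hRR := hpe (i + r) (show (i + r) % 2 = 0 by omega)
      (show a + (i + r) / 2 < n by omega)
    simp only [hRR]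
    rw [hg ((i + r) / 2) (by omega) (by omega), if_neg (show ¬((i + r) / 2 < t) by omega)]
    rw [← cOdd_eq (φ := φ) (show a + i / 2 + 1 < n by omega)]
    congr 1
    omega

open Classical in
noncomputable def Fmap (c : ℕ → ℕ) (M : ℕ → Finset ℕ) : (Σ _ : ℕ, ℕ) → (Σ _ : ℕ, ℕ) := fun k =>
  if h : ∃ m, m < k.1 ∧ c (k.2 + m + k.1) ∈ M (k.2 + m) then
    ⟨k.2 + Nat.find h, k.2 + Nat.find h + k.1⟩
  else if h2 : ∃ m, m + 1 < k.1 ∧ c (k.2 + m + 1) ∈ M (k.2 + m + k.1) then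
    ⟨k.2 + Nat.find h2 + k.1, k.2 + Nat.find h2 + 1⟩
  else ⟨0, 0⟩

open Classical in
lemma Fmap_spec (c : ℕ → ℕ) (M : ℕ → Finset ℕ) (k : Σ _ : ℕ, ℕ)
    (hne : (∃ m, m < k.1 ∧ c (k.2 + m + k.1) ∈ M (k.2 + m)) ∨
           (∃ m, m + 1 < k.1 ∧ c (k.2 + m + 1) ∈ M (k.2 + m + k.1))) :
    ∃ m, (m < k.1 ∧ Fmap c M k = ⟨k.2 + m, k.2 + m + k.1⟩ ∧
            c (k.2 + m + k.1) ∈ M (k.2 + m)) ∨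
         (m + 1 < k.1 ∧ Fmap c M k = ⟨k.2 + m + k.1, k.2 + m + 1⟩ ∧
            c (k.2 + m + 1) ∈ M (k.2 + m + k.1)) := by
  unfold Fmap
  split_ifs with h h2
  · exact ⟨Nat.find h, Or.inl ⟨(Nat.find_spec h).1, rfl, (Nat.find_spec h).2⟩⟩
  · exact ⟨Nat.find h2, Or.inr ⟨(Nat.find_spec h2).1, rfl, (Nat.find_spec h2).2⟩⟩
  · exfalso
    rcases hne with ⟨m, hm1, hm2⟩ | ⟨m, hm1, hm2⟩
    · exact h ⟨m, hm1, hm2⟩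
    · exact h2 ⟨m, hm1, hm2⟩

lemma not_nonrep {n ℓ : ℕ} {φ : GnlVert n ℓ → ℕ} (hℓ : 1 ≤ ℓ)
    (hn : Real.exp ((ℓ : ℝ) + 2) < (n : ℝ)) (hφ : ∀ v, φ v ∈ badL n ℓ v) :
    ¬ Nonrepetitive (Gnl n ℓ) φ := by
  classical
  intro hnr
  have hn2 : 2 ≤ n := by
    have h1 : (1 : ℝ) ≤ Real.exp ((ℓ : ℝ) + 2) := Real.one_le_exp (by positivity)
    have h2 : (1 : ℝ) < (n : ℝ) := lt_of_le_of_lt h1 hn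
    have := Nat.one_lt_cast.mp h2
    omega
  set c := cOdd n ℓ φ with hc
  set M := missB n ℓ φ with hM
  set T := n / 2 with hT
  set K : Finset (Σ _ : ℕ, ℕ) :=
    (Finset.Icc 1 T).sigma (fun t => Finset.range (n + 1 - 2 * t)) with hK
  set P : Finset (Σ _ : ℕ, ℕ) :=
    (Finset.range n).sigma (fun b => (Finset.range n).filter (fun j => c j ∈ M b)) with hP
  have hKmem : ∀ k : (Σ _ : ℕ, ℕ), k ∈ K → 1 ≤ k.1 ∧ k.1 ≤ T ∧ k.2 + 2 * k.1 ≤ n := by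
    intro k hk
    rw [hK, Finset.mem_sigma, Finset.mem_Icc, Finset.mem_range] at hk
    have hTn : 2 * T ≤ n := by omega
    omega
  have hmaps : ∀ k ∈ K, Fmap c M k ∈ P := by
    intro k hk
    obtain ⟨h1, h2, h3⟩ := hKmem k hk
    obtain ⟨m, hm⟩ := Fmap_spec c M k (key hφ hnr h1 h3)
    rcases hm with ⟨hmt, hF, hmem⟩ | ⟨hmt, hF, hmem⟩
    · rw [hF, hP, Finset.mem_sigma]
      exact ⟨Finset.mem_range.2 (show k.2 + m < n by omega),
        Finset.mem_filter.2 ⟨Finset.mem_range.2 (show k.2 + m + k.1 < n by omega), hmem⟩⟩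
    · rw [hF, hP, Finset.mem_sigma]
      exact ⟨Finset.mem_range.2 (show k.2 + m + k.1 < n by omega),
        Finset.mem_filter.2 ⟨Finset.mem_range.2 (show k.2 + m + 1 < n by omega), hmem⟩⟩
  have hfib : ∀ q ∈ P, (∑ k ∈ K.filter (fun k => Fmap c M k = q), ((k.1 : ℝ))⁻¹) ≤ 1 := by
    intro q hq
    set tq := if q.1 < q.2 then q.2 - q.1 else q.1 - q.2 + 1 with htq
    set Iq := if q.1 < q.2 then Finset.Icc (q.1 + 1 - tq) q.1
      else Finset.Icc (q.1 + 2 - 2 * tq) (q.1 - tq) with hIq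
    have hkey : ∀ k ∈ K.filter (fun k => Fmap c M k = q), k.1 = tq ∧ k.2 ∈ Iq := by
      intro k hk
      rw [Finset.mem_filter] at hk
      obtain ⟨hkK, hFk⟩ := hk
      obtain ⟨h1, h2, h3⟩ := hKmem k hkK
      obtain ⟨m, hm⟩ := Fmap_spec c M k (key hφ hnr h1 h3)
      rcases hm with ⟨hmt, hF, hmem⟩ | ⟨hmt, hF, hmem⟩
      · have hqe : q = (⟨k.2 + m, k.2 + m + k.1⟩ : Σ _ : ℕ, ℕ) := hFk.symm.trans hF
        have hq1 : q.1 = k.2 + m := by rw [hqe]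
        have hq2 : q.2 = k.2 + m + k.1 := by rw [hqe]
        have hlt : q.1 < q.2 := by omega
        have ht : k.1 = tq := by rw [htq, if_pos hlt]; omega
        refine ⟨ht, ?_⟩
        rw [hIq, if_pos hlt, Finset.mem_Icc]
        omega
      · have hqe : q = (⟨k.2 + m + k.1, k.2 + m + 1⟩ : Σ _ : ℕ, ℕ) := hFk.symm.trans hF
        have hq1 : q.1 = k.2 + m + k.1 := by rw [hqe]
        have hq2 : q.2 = k.2 + m + 1 := by rw [hqe]
        have hlt : ¬ (q.1 < q.2) := by omega
        have ht : k.1 = tq := by rw [htq, if_neg hlt]; omega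
        refine ⟨ht, ?_⟩
        rw [hIq, if_neg hlt, Finset.mem_Icc]
        omega
    have hcard : (K.filter (fun k => Fmap c M k = q)).card ≤ tq := by
      have h1 : (K.filter (fun k => Fmap c M k = q)).card ≤ Iq.card := by
        apply Finset.card_le_card_of_injOn (fun k => k.2)
        · intro k hk; exact (hkey k hk).2
        · intro k hk k' hk' he
          obtain ⟨k1, k2⟩ := k
          obtain ⟨k1', k2'⟩ := k'
          have e1 : k1 = tq := (hkey _ hk).1
          have e1' : k1' = tq := (hkey _ hk').1
          simp only at he
          subst e1; subst e1'; subst he; rfl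
      have h2 : Iq.card ≤ tq := by
        rw [hIq]
        split_ifs <;> rw [Nat.card_Icc] <;> omega
      omega
    rcases Finset.eq_empty_or_nonempty (K.filter (fun k => Fmap c M k = q)) with he | hne
    · rw [he, Finset.sum_empty]; norm_num
    · obtain ⟨k0, hk0⟩ := hne
      have ht1 : 1 ≤ tq := by
        have := (hkey k0 hk0).1
        have := (hKmem k0 (Finset.mem_filter.1 hk0).1).1
        omega
      calc ∑ k ∈ K.filter (fun k => Fmap c M k = q), ((k.1 : ℝ))⁻¹
          = ∑ k ∈ K.filter (fun k => Fmap c M k = q), ((tq : ℝ))⁻¹ :=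
            Finset.sum_congr rfl (fun k hk => by rw [(hkey k hk).1])
        _ = ((K.filter (fun k => Fmap c M k = q)).card : ℝ) * ((tq : ℝ))⁻¹ := by
            rw [Finset.sum_const, nsmul_eq_mul]
        _ ≤ (tq : ℝ) * ((tq : ℝ))⁻¹ := by
            apply mul_le_mul_of_nonneg_right _ (by positivity)
            exact_mod_cast hcard
        _ = 1 := mul_inv_cancel₀ (by positivity)
  -- upper bound
  have hup : (∑ k ∈ K, ((k.1 : ℝ))⁻¹) ≤ (P.card : ℝ) := by
    rw [← Finset.sum_fiberwise_of_maps_to hmaps (fun k => ((k.1 : ℝ))⁻¹)]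
    calc ∑ q ∈ P, ∑ k ∈ K.filter (fun k => Fmap c M k = q), ((k.1 : ℝ))⁻¹
        ≤ ∑ q ∈ P, (1 : ℝ) := Finset.sum_le_sum hfib
      _ = (P.card : ℝ) := by rw [Finset.sum_const, nsmul_eq_mul, mul_one]
  have hPcard : P.card ≤ n * (ℓ - 1) := by
    rw [hP, Finset.card_sigma]
    have hbd : ∀ b ∈ Finset.range n,
        ((Finset.range n).filter (fun j => c j ∈ M b)).card ≤ ℓ - 1 := by
      intro b hb
      rw [Finset.mem_range] at hb
      calc ((Finset.range n).filter (fun j => c j ∈ M b)).card ≤ (M b).card := by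
            apply Finset.card_le_card_of_injOn c
            · intro j hj; exact (Finset.mem_filter.1 hj).2
            · intro j hj j' hj' he
              exact cOdd_inj hφ (Finset.mem_range.1 (Finset.mem_filter.1 hj).1)
                (Finset.mem_range.1 (Finset.mem_filter.1 hj').1) he
        _ ≤ ℓ - 1 := missB_card hφ hℓ hb
    calc ∑ b ∈ Finset.range n, ((Finset.range n).filter (fun j => c j ∈ M b)).card
        ≤ ∑ _b ∈ Finset.range n, (ℓ - 1) := Finset.sum_le_sum hbd
      _ = n * (ℓ - 1) := by rw [Finset.sum_const, Finset.card_range, smul_eq_mul]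
  -- lower bound
  have hlow : ((n : ℝ) + 1) * ((harmonic T : ℚ) : ℝ) - 2 * T ≤ ∑ k ∈ K, ((k.1 : ℝ))⁻¹ := by
    rw [hK, Finset.sum_sigma]
    have hstep : ∀ t ∈ Finset.Icc 1 T,
        ((n : ℝ) + 1) * ((t : ℝ))⁻¹ - 2 ≤ ∑ _a ∈ Finset.range (n + 1 - 2 * t), ((t : ℝ))⁻¹ := by
      intro t ht
      rw [Finset.mem_Icc] at ht
      have h2t : 2 * t ≤ n := by
        have : 2 * T ≤ n := by omega
        omega
      rw [Finset.sum_const, Finset.card_range, nsmul_eq_mul]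
      have hcast : ((n + 1 - 2 * t : ℕ) : ℝ) = (n : ℝ) + 1 - 2 * t := by
        have : 2 * t ≤ n + 1 := by omega
        push_cast [Nat.cast_sub this]
        ring
      rw [hcast]
      have ht0 : (0 : ℝ) < t := by exact_mod_cast ht.1
      have hinv : (t : ℝ) * ((t : ℝ))⁻¹ = 1 := mul_inv_cancel₀ (by positivity)
      calc ((n : ℝ) + 1) * ((t : ℝ))⁻¹ - 2
          = ((n : ℝ) + 1) * ((t : ℝ))⁻¹ - 2 * ((t : ℝ) * ((t : ℝ))⁻¹) := by rw [hinv]; ring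
        _ = ((n : ℝ) + 1 - 2 * t) * ((t : ℝ))⁻¹ := by ring
        _ ≤ ((n : ℝ) + 1 - 2 * t) * ((t : ℝ))⁻¹ := le_refl _
    calc ((n : ℝ) + 1) * ((harmonic T : ℚ) : ℝ) - 2 * T
        = ∑ t ∈ Finset.Icc 1 T, (((n : ℝ) + 1) * ((t : ℝ))⁻¹ - 2) := by
          rw [Finset.sum_sub_distrib, ← Finset.mul_sum, Finset.sum_const, Nat.card_Icc]
          have : (harmonic T : ℝ) = ∑ t ∈ Finset.Icc 1 T, ((t : ℝ))⁻¹ := by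
            rw [harmonic_eq_sum_Icc]
            push_cast
            rfl
          rw [this]
          simp
          ring
      _ ≤ _ := Finset.sum_le_sum hstep
  -- harmonic lower bound
  have hharm : (ℓ : ℝ) + 1 ≤ ((harmonic T : ℚ) : ℝ) := by
    have hlog := log_add_one_le_harmonic T
    have hexp : Real.exp ((ℓ : ℝ) + 1) ≤ ((T : ℝ) + 1) := by
      have he2 : (2 : ℝ) ≤ Real.exp 1 := by
        have := Real.add_one_le_exp 1
        linarith
      have hsplit : Real.exp ((ℓ : ℝ) + 2) = Real.exp ((ℓ : ℝ) + 1) * Real.exp 1 := by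
        rw [← Real.exp_add]; ring_nf
      have hTn : (n : ℝ) ≤ 2 * ((T : ℝ) + 1) := by
        have : n ≤ 2 * T + 2 := by omega
        exact_mod_cast this
      nlinarith [Real.exp_pos ((ℓ : ℝ) + 1)]
    have hlog2 : (ℓ : ℝ) + 1 ≤ Real.log ((T : ℝ) + 1) := by
      rw [Real.le_log_iff_exp_le (by positivity)]
      exact hexp
    calc (ℓ : ℝ) + 1 ≤ Real.log ((T : ℝ) + 1) := hlog2
      _ ≤ _ := by exact_mod_cast hlog
  -- put it together
  have hcast : ((n * (ℓ - 1) : ℕ) : ℝ) = (n : ℝ) * ((ℓ : ℝ) - 1) := by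
    push_cast [Nat.cast_sub hℓ]
    ring
  have hPn : (P.card : ℝ) ≤ (n : ℝ) * ((ℓ : ℝ) - 1) := by
    rw [← hcast]
    exact_mod_cast hPcard
  have hTle : (2 : ℝ) * T ≤ (n : ℝ) := by
    have : 2 * T ≤ n := by omega
    exact_mod_cast this
  have hn0 : (0 : ℝ) ≤ (n : ℝ) := by positivity
  nlinarith [hlow, hup, hPn, hharm, hTle]

end


/-- For `ℓ ≥ 1` and `n > e^{ℓ+2}`, the Thue choice number of `G_{n,ℓ}` is greater
than `ℓ`: there is an assignment of color lists of size `ℓ` to the vertices of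
`G_{n,ℓ}` for which no coloring from the lists is nonrepetitive. -/
theorem stmt2 (n ℓ : ℕ) (hℓ : 1 ≤ ℓ) (hn : Real.exp ((ℓ : ℝ) + 2) < (n : ℝ)) :
    ¬ ThueChoosable (Gnl n ℓ) ℓ ∧
      ∃ L : GnlVert n ℓ → Finset ℕ, (∀ v, (L v).card = ℓ) ∧
        ∀ φ : GnlVert n ℓ → ℕ, (∀ v, φ v ∈ L v) → ¬ Nonrepetitive (Gnl n ℓ) φ := by
  constructor
  · intro hTC
    obtain ⟨φ, hφ, hnr⟩ := hTC (badL n ℓ) (fun v => (badL_card hℓ v).ge)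
    exact not_nonrep hℓ hn hφ hnr
  · exact ⟨badL n ℓ, badL_card hℓ, fun φ hφ => not_nonrep hℓ hn hφ⟩
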